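/- Let τ ∈ ℂ with Im τ > 0, −1/2 < Re τ ≤ 1/2 and |τ| > 1, and let Γ_τ = {m + n·τ : m, n ∈ ℤ}. Suppose I(z) = a·conj(z) + b with a, b ∈ ℂ is a lift of an antiholomorphic involution of the torus ℂ/Γ_τ. Then a ∈ {1, −1}. -/

import Mathlib

open Complex

theorem stmt_4 (τ : ℂ) (hτ : 0 < τ.im)
    (hre : -(1/2) < τ.re ∧ τ.re ≤ 1/2) (habs : 1 < ‖τ‖)
    (Γ : Set ℂ) (hΓ : Γ = {z : ℂ | ∃ m n : ℤ, z = m + n * τ})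
    (a b : ℂ)
    (I : ℂ → ℂ) (hI : ∀ z : ℂ, I z = a * starRingEnd ℂ z + b)
    (hper : ∀ z : ℂ, ∀ ω ∈ Γ, I (z + ω) - I z ∈ Γ)
    (hinv : ∀ z : ℂ, I (I z) - z ∈ Γ) :
    a = 1 ∨ a = -1 := by
  obtain ⟨hr1, hr2⟩ := hre
  have hone : (1:ℂ) ∈ Γ := by
    rw [hΓ]; exact ⟨1, 0, by push_cast; ring⟩
  have hsub : ∀ x ∈ Γ, ∀ y ∈ Γ, x - y ∈ Γ := by
    rw [hΓ]; rintro x ⟨m1, n1, rfl⟩ y ⟨m2, n2, rfl⟩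
    exact ⟨m1 - m2, n1 - n2, by push_cast; ring⟩
  -- a ∈ Γ
  have haΓ : a ∈ Γ := by
    have h := hper 0 1 hone
    simp only [hI, zero_add, map_one, map_zero, mul_one, mul_zero] at h
    simpa using h
  -- the constant c ∈ Γ
  have hc : (a * starRingEnd ℂ b + b) ∈ Γ := by
    have h := hinv 0
    simp only [hI, map_zero, mul_zero, zero_add, map_add, map_mul, Complex.conj_conj,
      sub_zero] at h
    exact h
  have hk : ∀ z : ℂ, (a * starRingEnd ℂ a - 1) * z ∈ Γ := by
    intro z
    have h1 := hinv z
    rw [hI, hI] at h1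
    have h2 := hsub _ h1 _ hc
    convert h2 using 1
    simp only [map_add, map_mul, Complex.conj_conj]
    ring
  -- normSq a = 1
  have hns : Complex.normSq a = 1 := by
    by_contra hne
    have hk0 : a * starRingEnd ℂ a - 1 ≠ 0 := by
      rw [Complex.mul_conj]
      intro h
      exact hne (by exact_mod_cast sub_eq_zero.mp h)
    have h := hk ((1/2) / (a * starRingEnd ℂ a - 1))
    rw [mul_div_cancel₀ _ hk0, hΓ] at h
    obtain ⟨m, n, hmn⟩ := h
    have him := congrArg Complex.im hmn
    simp [Complex.add_im, Complex.mul_im] at him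
    have hn : n = 0 := by
      rcases him with h | h
      · exact_mod_cast h
      · exact absurd h (ne_of_gt hτ)
    subst hn
    have hre' := congrArg Complex.re hmn
    simp [Complex.add_re, Complex.mul_re] at hre'
    have : (2 * m : ℝ) = 1 := by linarith
    have : (2 * m : ℤ) = 1 := by exact_mod_cast this
    omega
  -- now a = m + n τ with normSq = 1
  rw [hΓ] at haΓ
  obtain ⟨m, n, hmn⟩ := haΓ
  have hre_a : a.re = m + n * τ.re := by rw [hmn]; simp [Complex.add_re, Complex.mul_re]
  have him_a : a.im = n * τ.im := by rw [hmn]; simp [Complex.add_im, Complex.mul_im]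
  have hτ2 : 1 < τ.re ^ 2 + τ.im ^ 2 := by
    have h1 : (1:ℝ) < ‖τ‖ ^ 2 := by nlinarith [norm_nonneg τ]
    rw [Complex.sq_norm, Complex.normSq_apply] at h1
    nlinarith
  have heq : ((m:ℝ) + n * τ.re) ^ 2 + ((n:ℝ) * τ.im) ^ 2 = 1 := by
    rw [Complex.normSq_apply, hre_a, him_a] at hns
    nlinarith
  have hn0 : n = 0 := by
    by_contra hn
    have hn2 : (1:ℤ) ≤ n ^ 2 := by
      rcases lt_or_gt_of_ne hn with h | h <;> nlinarith
    have hn2' : (1:ℝ) ≤ (n:ℝ) ^ 2 := by exact_mod_cast hn2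
    have h3 : (1:ℝ) < (n:ℝ) ^ 2 * (τ.re ^ 2 + τ.im ^ 2) := by nlinarith
    rcases le_or_gt 0 ((m:ℝ) * n) with h | h
    · have hA : (1:ℤ) ≤ m ^ 2 - m * n + n ^ 2 := by
        have h4 : (3:ℤ) ≤ 4 * (m ^ 2 - m * n + n ^ 2) := by nlinarith [sq_nonneg (2*m - n)]
        omega
      have hA' : (1:ℝ) ≤ (m:ℝ) ^ 2 - m * n + n ^ 2 := by exact_mod_cast hA
      have hp : (0:ℝ) ≤ (m:ℝ) * n * (2 * τ.re + 1) := mul_nonneg h (by linarith)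
      nlinarith
    · have hA : (1:ℤ) ≤ m ^ 2 + m * n + n ^ 2 := by
        have h4 : (3:ℤ) ≤ 4 * (m ^ 2 + m * n + n ^ 2) := by nlinarith [sq_nonneg (2*m + n)]
        omega
      have hA' : (1:ℝ) ≤ (m:ℝ) ^ 2 + m * n + n ^ 2 := by exact_mod_cast hA
      have hp : (0:ℝ) ≤ (-((m:ℝ) * n)) * (1 - 2 * τ.re) := by
        apply mul_nonneg <;> linarith
      nlinarith
  subst hn0
  have hm : m = 1 ∨ m = -1 := by
    have : ((m:ℝ)) ^ 2 = 1 := by push_cast at heq ⊢; nlinarith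
    have hm2 : (m:ℤ) ^ 2 = 1 := by exact_mod_cast this
    have := Int.isUnit_iff.mp (IsUnit.of_mul_eq_one (a := m) m (by rw [← sq]; exact hm2))
    exact this
  rcases hm with h | h
  · left; rw [hmn, h]; push_cast; ring
  · right; rw [hmn, h]; push_cast; ring
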